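/- The derivative f'(y) = τ(y) + y/(1 - e^{-βy}), where τ(y) = l + (1/β) log((1-e^{-βy})/(1-e^{-βT})), is strictly increasing on (0,∞), tends to -∞ as y → 0+, and tends to +∞ as y → ∞; hence f' is a bijection from (0,∞) to ℝ. -/

import Mathlib

open Real Set Filter

/-- Basic inequality: `u·e^{-u} ≤ 1 - e^{-u}` for `0 ≤ u`. -/
lemma aux_key_ineq (u : ℝ) (hu : 0 ≤ u) :
    u * Real.exp (-u) ≤ 1 - Real.exp (-u) := by
  have h1 : u + 1 ≤ Real.exp u := Real.add_one_le_exp u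
  have h2 : Real.exp u * Real.exp (-u) = 1 := by
    rw [← Real.exp_add]; simp
  have h3 : (u + 1) * Real.exp (-u) ≤ Real.exp u * Real.exp (-u) :=
    mul_le_mul_of_nonneg_right h1 (Real.exp_pos _).le
  nlinarith [Real.exp_pos (-u)]

lemma aux_s_pos (β y : ℝ) (hβ : 0 < β) (hy : 0 < y) :
    0 < 1 - Real.exp (-β * y) := by
  have : -β * y < 0 := by nlinarith
  have := Real.exp_lt_one_iff.mpr this
  linarith

/-- The derivative `f'(y) = τ(y) + y/(1-e^{-βy})` is strictly increasing on
`(0,∞)`, tends to `-∞` as `y → 0⁺` and to `+∞` as `y → ∞`; hence it is a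
bijection from `(0,∞)` onto `ℝ`. -/
theorem fderiv_strictMono_and_bijective
    (l β T : ℝ) (hβ : 0 < β) (hT : 0 < T) :
    let τ : ℝ → ℝ := fun y =>
      l + (1 / β) * Real.log ((1 - Real.exp (-β * y)) / (1 - Real.exp (-β * T)))
    let f' : ℝ → ℝ := fun y => τ y + y / (1 - Real.exp (-β * y))
    StrictMonoOn f' (Set.Ioi 0) ∧
    Tendsto f' (nhdsWithin 0 (Set.Ioi 0)) atBot ∧
    Tendsto f' atTop atTop ∧
    Set.BijOn f' (Set.Ioi 0) Set.univ := by
  intro τ f'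
  set c : ℝ := 1 - Real.exp (-β * T) with hc_def
  have hc : 0 < c := aux_s_pos β T hβ hT
  -- derivative of f'
  set D : ℝ → ℝ := fun y =>
    (1 / β) * (β * Real.exp (-β * y) / c / ((1 - Real.exp (-β * y)) / c)) +
    (1 * (1 - Real.exp (-β * y)) - y * (β * Real.exp (-β * y))) /
      (1 - Real.exp (-β * y)) ^ 2 with hD_def
  have hderiv : ∀ y ∈ Set.Ioi (0 : ℝ), HasDerivAt f' (D y) y := by
    intro y hy
    have hs : 0 < 1 - Real.exp (-β * y) := aux_s_pos β y hβ hy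
    have h1 : HasDerivAt (fun y : ℝ => -β * y) (-β) y := by
      simpa using (hasDerivAt_id y).const_mul (-β)
    have hE : HasDerivAt (fun y : ℝ => Real.exp (-β * y))
        (Real.exp (-β * y) * (-β)) y := h1.exp
    have hs' : HasDerivAt (fun y : ℝ => 1 - Real.exp (-β * y))
        (β * Real.exp (-β * y)) y := by
      have := hE.const_sub 1
      rw [show β * Real.exp (-β * y) = -(Real.exp (-β * y) * (-β)) by ring]; exact this
    have hq : HasDerivAt (fun y : ℝ => (1 - Real.exp (-β * y)) / c)
        (β * Real.exp (-β * y) / c) y := hs'.div_const c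
    have hlog : HasDerivAt (fun y : ℝ => Real.log ((1 - Real.exp (-β * y)) / c))
        (β * Real.exp (-β * y) / c / ((1 - Real.exp (-β * y)) / c)) y :=
      hq.log (by positivity)
    have hτ : HasDerivAt τ
        ((1 / β) * (β * Real.exp (-β * y) / c / ((1 - Real.exp (-β * y)) / c))) y :=
      ((hlog.const_mul (1 / β)).const_add l)
    have hg : HasDerivAt (fun y : ℝ => y / (1 - Real.exp (-β * y)))
        ((1 * (1 - Real.exp (-β * y)) - y * (β * Real.exp (-β * y))) /
          (1 - Real.exp (-β * y)) ^ 2) y :=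
      (hasDerivAt_id y).div hs' hs.ne'
    exact hτ.add hg
  have hDpos : ∀ y ∈ Set.Ioi (0 : ℝ), 0 < D y := by
    intro y hy
    have hy0 : (0 : ℝ) < y := hy
    have hs : 0 < 1 - Real.exp (-β * y) := aux_s_pos β y hβ hy0
    have hkey : β * y * Real.exp (-(β * y)) ≤ 1 - Real.exp (-(β * y)) :=
      aux_key_ineq (β * y) (by positivity)
    have hneg : -β * y = -(β * y) := by ring
    have hterm1 : 0 < (1 / β) *
        (β * Real.exp (-β * y) / c / ((1 - Real.exp (-β * y)) / c)) := by
      positivity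
    have hterm2 : 0 ≤ (1 * (1 - Real.exp (-β * y)) - y * (β * Real.exp (-β * y))) /
        (1 - Real.exp (-β * y)) ^ 2 := by
      apply div_nonneg _ (by positivity)
      rw [hneg] at *
      nlinarith
    simp only [hD_def]
    linarith
  have hcont : ContinuousOn f' (Set.Ioi 0) := fun y hy =>
    ((hderiv y hy).differentiableAt).continuousAt.continuousWithinAt
  have hmono : StrictMonoOn f' (Set.Ioi 0) := by
    apply strictMonoOn_of_deriv_pos (convex_Ioi 0) hcont
    intro y hy
    rw [interior_Ioi] at hy
    rw [(hderiv y hy).deriv]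
    exact hDpos y hy
  -- tendsto atBot at 0⁺
  have hbot : Tendsto f' (nhdsWithin 0 (Set.Ioi 0)) atBot := by
    have hτbot : Tendsto τ (nhdsWithin 0 (Set.Ioi 0)) atBot := by
      have hq : Tendsto (fun y : ℝ => (1 - Real.exp (-β * y)) / c)
          (nhdsWithin 0 (Set.Ioi 0)) (nhdsWithin 0 (Set.Ioi 0)) := by
        apply tendsto_nhdsWithin_of_tendsto_nhds_of_eventually_within
        · have : ContinuousAt (fun y : ℝ => (1 - Real.exp (-β * y)) / c) 0 := by
            fun_prop (disch := exact hc.ne')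
          have h0 : (1 - Real.exp (-β * 0)) / c = 0 := by simp
          simpa [h0] using this.continuousWithinAt.tendsto
        · filter_upwards [self_mem_nhdsWithin] with y hy
          exact div_pos (aux_s_pos β y hβ hy) hc
      have hlogbot : Tendsto (fun y : ℝ =>
          Real.log ((1 - Real.exp (-β * y)) / c)) (nhdsWithin 0 (Set.Ioi 0)) atBot :=
        Real.tendsto_log_nhdsGT_zero.comp hq
      have := (hlogbot.const_mul_atBot (by positivity : (0:ℝ) < 1 / β))
      exact tendsto_atBot_add_const_left _ l this
    apply tendsto_atBot_mono' _ _ (tendsto_atBot_add_const_right _ (Real.exp β / β) hτbot)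
    filter_upwards [Ioc_mem_nhdsGT (zero_lt_one' ℝ),
      self_mem_nhdsWithin] with y hy1 hy2
    have hy0 : (0 : ℝ) < y := hy2
    have hs : 0 < 1 - Real.exp (-β * y) := aux_s_pos β y hβ hy0
    have hkey : β * y * Real.exp (-(β * y)) ≤ 1 - Real.exp (-(β * y)) :=
      aux_key_ineq (β * y) (by positivity)
    have hneg : -β * y = -(β * y) := by ring
    have hlow : β * y * Real.exp (-β * y) ≤ 1 - Real.exp (-β * y) := by
      rw [hneg]; exact hkey
    have hEy : Real.exp (β * y) ≤ Real.exp β := by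
      apply Real.exp_le_exp.mpr; nlinarith [hy1.2]
    have hg : y / (1 - Real.exp (-β * y)) ≤ Real.exp β / β := by
      rw [div_le_div_iff₀ hs hβ]
      have h1 : y * β ≤ Real.exp (β * y) * (1 - Real.exp (-β * y)) := by
        have hinv : Real.exp (β * y) * Real.exp (-β * y) = 1 := by
          rw [← Real.exp_add]; simp
        have h2 := mul_le_mul_of_nonneg_left hlow (Real.exp_pos (β * y)).le
        have heq : Real.exp (β * y) * (β * y * Real.exp (-β * y)) = y * β := by
          have h3 : Real.exp (β * y) * (β * y * Real.exp (-β * y)) =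
              (β * y) * (Real.exp (β * y) * Real.exp (-β * y)) := by ring
          rw [h3, hinv]; ring
        linarith
      calc y * β ≤ Real.exp (β * y) * (1 - Real.exp (-β * y)) := h1
        _ ≤ Real.exp β * (1 - Real.exp (-β * y)) :=
          mul_le_mul_of_nonneg_right hEy hs.le
    show τ y + y / (1 - Real.exp (-β * y)) ≤ τ y + Real.exp β / β
    exact add_le_add le_rfl hg
  -- tendsto atTop
  have htop : Tendsto f' atTop atTop := by
    apply tendsto_atTop_mono' _ _ (tendsto_atTop_add_const_left _ l tendsto_id)
    filter_upwards [Filter.eventually_ge_atTop (max T 1)] with y hy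
    have hyT : T ≤ y := le_trans (le_max_left _ _) hy
    have hy0 : (0 : ℝ) < y := lt_of_lt_of_le hT hyT
    have hs : 0 < 1 - Real.exp (-β * y) := aux_s_pos β y hβ hy0
    have hs1 : 1 - Real.exp (-β * y) ≤ 1 := by
      have := Real.exp_pos (-β * y); linarith
    have hτl : l ≤ τ y := by
      have hratio : 1 ≤ (1 - Real.exp (-β * y)) / c := by
        rw [le_div_iff₀ hc]
        have : Real.exp (-β * y) ≤ Real.exp (-β * T) :=
          Real.exp_le_exp.mpr (by nlinarith)
        simp only [hc_def]; linarith
      have := Real.log_nonneg hratio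
      have h2 : 0 ≤ (1 / β) * Real.log ((1 - Real.exp (-β * y)) / c) := by
        positivity
      simp only [τ]; linarith
    have hg : y ≤ y / (1 - Real.exp (-β * y)) := by
      rw [le_div_iff₀ hs]; nlinarith
    show l + id y ≤ τ y + y / (1 - Real.exp (-β * y))
    exact add_le_add hτl hg
  refine ⟨hmono, hbot, htop, ?_⟩
  refine ⟨fun x _ => Set.mem_univ _, hmono.injOn, ?_⟩
  intro z _
  -- find a with f' a < z
  have hne : (nhdsWithin (0:ℝ) (Set.Ioi 0)).NeBot := nhdsGT_neBot 0
  obtain ⟨a, ha, haz⟩ : ∃ a, a ∈ Set.Ioi (0:ℝ) ∧ f' a ≤ z := by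
    have h1 : ∀ᶠ y in nhdsWithin (0:ℝ) (Set.Ioi 0), f' y ≤ z :=
      hbot.eventually (Filter.eventually_le_atBot z)
    obtain ⟨a, ha1, ha2⟩ := (h1.and self_mem_nhdsWithin).exists
    exact ⟨a, ha2, ha1⟩
  obtain ⟨b, hab, hbz⟩ : ∃ b, a ≤ b ∧ z ≤ f' b := by
    have h1 : ∀ᶠ y in atTop, z ≤ f' y := htop.eventually (Filter.eventually_ge_atTop z)
    obtain ⟨b, hb1, hb2⟩ := (h1.and (Filter.eventually_ge_atTop a)).exists
    exact ⟨b, hb2, hb1⟩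
  have hIcc : Set.Icc a b ⊆ Set.Ioi 0 := fun x hx => lt_of_lt_of_le ha hx.1
  have := intermediate_value_Icc hab (hcont.mono hIcc)
  obtain ⟨x, hx, hfx⟩ := this (Set.mem_Icc.mpr ⟨haz, hbz⟩)
  exact ⟨x, hIcc hx, hfx⟩
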